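/- Let P = conv(u_0, …, u_n) ⊆ ℝ^n be a full-dimensional lattice simplex, fix an integer k with 2 ≤ k ≤ min_{j≠0} l_{0j}, let t = (t_1, …, t_n) ∈ ℤ_{≥0}^n, and let P_{0,k,t} = P_{0,k} + Σ_{j=1}^n t_j ũ_{0j} be the translated k-dilation. Then the following are equivalent: (i) P_{0,k,t} ⊆ P; (ii) for every 1 ≤ s ≤ n, the point ((l_{0s} − r_{0s,k})/l_{0s})·u_s + (r_{0s,k}/l_{0s})·u_0 + Σ_{j=1}^n t_j ũ_{0j} lies in P; (iii) Σ_{j=1}^n t_j/l_{0j} ≤ min_{1≤s≤n} r_{0s,k}/l_{0s}. -/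

import Mathlib

open Finset Pointwise

noncomputable section

/-- The real point corresponding to a lattice point. -/
def toR {n : ℕ} (v : Fin n → ℤ) : Fin n → ℝ := fun x => (v x : ℝ)

/-- The lattice simplex (as a subset of `ℝ^n`) with the given lattice vertices. -/
def lsimplex {n m : ℕ} (u : Fin m → Fin n → ℤ) : Set (Fin n → ℝ) :=
  convexHull ℝ (Set.range fun i => toR (u i))

/-- The lattice length `l_{ij}` of the edge `u_i u_j`:
the gcd of the coordinates of `u_j - u_i`. -/
def latLen {n m : ℕ} (u : Fin m → Fin n → ℤ) (i j : Fin m) : ℕ :=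
  Finset.univ.gcd fun x => (u j x - u i x).natAbs

/-- `r_{ij,k}`: the least nonnegative residue of `l_{ij}` modulo `k`. -/
def rmod {n m : ℕ} (u : Fin m → Fin n → ℤ) (i j : Fin m) (k : ℕ) : ℕ :=
  latLen u i j % k

/-- The vertices of the `k`-dilation `P_{i,k}`: the vertex `u_i` together with, for `j ≠ i`,
the points `((l_{ij} - r_{ij,k})/l_{ij})·u_j + (r_{ij,k}/l_{ij})·u_i`. -/
def dilVert {n m : ℕ} (u : Fin m → Fin n → ℤ) (i : Fin m) (k : ℕ) (j : Fin m) :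
    Fin n → ℝ :=
  if j = i then toR (u i)
  else
    ((((latLen u i j : ℝ) - (rmod u i j k : ℝ)) / (latLen u i j : ℝ)) • toR (u j))
      + (((rmod u i j k : ℝ) / (latLen u i j : ℝ)) • toR (u i))

/-- The `k`-dilation `P_{i,k}`. -/
def dil {n m : ℕ} (u : Fin m → Fin n → ℤ) (i : Fin m) (k : ℕ) : Set (Fin n → ℝ) :=
  convexHull ℝ (Set.range (dilVert u i k))

/-- The primitive edge vector `ũ_{ij} = (u_j - u_i)/l_{ij}`. -/
def primVec {n m : ℕ} (u : Fin m → Fin n → ℤ) (i j : Fin m) : Fin n → ℝ :=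
  (latLen u i j : ℝ)⁻¹ • (toR (u j) - toR (u i))

/-- The translated `k`-dilation `P_{i,k,t} = P_{i,k} + Σ_{j ≠ i} t_j ũ_{ij}`. -/
def dilT {n m : ℕ} (u : Fin m → Fin n → ℤ) (i : Fin m) (k : ℕ) (t : Fin m → ℕ) :
    Set (Fin n → ℝ) :=
  (fun y => y + ∑ j ∈ Finset.univ.erase i, (t j : ℝ) • primVec u i j) '' dil u i k

lemma lsimplex_mem_iff {n : ℕ} (u : Fin (n + 1) → Fin n → ℤ)
    (hind : AffineIndependent ℝ fun i => toR (u i))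
    (w : Fin (n + 1) → ℝ) (hw : ∑ i, w i = 1) :
    (∑ i, w i • toR (u i)) ∈ lsimplex u ↔ ∀ i, 0 ≤ w i := by
  have htop : affineSpan ℝ (Set.range fun i => toR (u i)) = ⊤ := by
    rw [hind.affineSpan_eq_top_iff_card_eq_finrank_add_one]
    simp [Module.finrank_fintype_fun_eq_card]
  let b : AffineBasis (Fin (n + 1)) ℝ (Fin n → ℝ) := ⟨fun i => toR (u i), hind, htop⟩
  have hmem : lsimplex u = {x | ∀ i, 0 ≤ b.coord i x} := by
    have : lsimplex u = convexHull ℝ (Set.range ⇑b) := rfl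
    rw [this, b.convexHull_eq_nonneg_coord]
  have hx : ∑ i, w i • toR (u i) = Finset.univ.affineCombination ℝ (fun i => toR (u i)) w :=
    (Finset.affineCombination_eq_linear_combination _ _ _ hw).symm
  rw [hmem, hx]
  constructor
  · intro h i
    have := h i
    rwa [show (fun i => toR (u i)) = ⇑b from rfl,
      b.coord_apply_combination_of_mem (Finset.mem_univ i) hw] at this
  · intro h i
    rw [show (fun i => toR (u i)) = ⇑b from rfl,
      b.coord_apply_combination_of_mem (Finset.mem_univ i) hw]
    exact h i

lemma mem_simplex_comb {n : ℕ} (u : Fin (n + 1) → Fin n → ℤ)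
    (hind : AffineIndependent ℝ fun i => toR (u i))
    (c : Fin (n + 1) → ℝ) (hc : ∀ j ∈ Finset.univ.erase (0 : Fin (n + 1)), 0 ≤ c j) :
    (toR (u 0) + ∑ j ∈ Finset.univ.erase (0 : Fin (n + 1)), c j • (toR (u j) - toR (u 0)))
        ∈ lsimplex u
      ↔ ∑ j ∈ Finset.univ.erase (0 : Fin (n + 1)), c j ≤ 1 := by
  classical
  set E : Finset (Fin (n + 1)) := Finset.univ.erase 0 with hE
  set w : Fin (n + 1) → ℝ := fun i => if i = 0 then 1 - ∑ j ∈ E, c j else c i with hwdef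
  have hwE : ∀ j ∈ E, w j = c j := by
    intro j hj
    simp [hwdef, Finset.ne_of_mem_erase hj]
  have hsum : ∑ i, w i = 1 := by
    rw [← Finset.add_sum_erase _ _ (Finset.mem_univ (0 : Fin (n + 1)))]
    rw [Finset.sum_congr rfl hwE]
    simp [hwdef]
  have hpt : ∑ i, w i • toR (u i)
      = toR (u 0) + ∑ j ∈ E, c j • (toR (u j) - toR (u 0)) := by
    rw [← Finset.add_sum_erase _ _ (Finset.mem_univ (0 : Fin (n + 1)))]
    rw [Finset.sum_congr rfl (fun j hj => by rw [hwE j hj])]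
    simp only [smul_sub, Finset.sum_sub_distrib, ← Finset.sum_smul]
    have hw0 : w 0 = 1 - ∑ j ∈ E, c j := by simp [hwdef]
    rw [hw0, sub_smul, one_smul]
    abel
  rw [← hpt, lsimplex_mem_iff u hind w hsum]
  constructor
  · intro h
    have := h 0
    simp only [hwdef, if_pos rfl] at this
    linarith
  · intro h i
    by_cases hi : i = 0
    · subst hi
      simp only [hwdef, if_pos rfl]
      linarith
    · rw [hwdef]
      simp only [hi, if_false]
      exact hc i (Finset.mem_erase.mpr ⟨hi, Finset.mem_univ i⟩)

/-- for the translated dilation `P_{0,k,t}`, the following are equivalent: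
(i) `P_{0,k,t} ⊆ P`; (ii) each translated vertex
`((l_{0s} − r_{0s,k})/l_{0s})·u_s + (r_{0s,k}/l_{0s})·u_0 + Σ_j t_j ũ_{0j}` lies in `P`;
(iii) `Σ_j t_j/l_{0j} ≤ r_{0s,k}/l_{0s}` for every `1 ≤ s ≤ n`. -/
theorem translated_dilation_subset_iff
    (n : ℕ) (u : Fin (n + 1) → Fin n → ℤ)
    (hind : AffineIndependent ℝ fun i => toR (u i))
    (k : ℕ) (hk : 2 ≤ k)
    (hkl : ∀ j, j ≠ (0 : Fin (n + 1)) → k ≤ latLen u 0 j)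
    (t : Fin (n + 1) → ℕ) (ht0 : t 0 = 0) :
    (dilT u 0 k t ⊆ lsimplex u ↔
      ∀ s ∈ Finset.univ.erase (0 : Fin (n + 1)),
        ∑ j ∈ Finset.univ.erase (0 : Fin (n + 1)), (t j : ℝ) / (latLen u 0 j : ℝ) ≤
          (rmod u 0 s k : ℝ) / (latLen u 0 s : ℝ)) ∧
    ((∀ s ∈ Finset.univ.erase (0 : Fin (n + 1)),
        (dilVert u 0 k s + ∑ j ∈ Finset.univ.erase (0 : Fin (n + 1)),
          (t j : ℝ) • primVec u 0 j) ∈ lsimplex u) ↔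
      ∀ s ∈ Finset.univ.erase (0 : Fin (n + 1)),
        ∑ j ∈ Finset.univ.erase (0 : Fin (n + 1)), (t j : ℝ) / (latLen u 0 j : ℝ) ≤
          (rmod u 0 s k : ℝ) / (latLen u 0 s : ℝ)) := by
  classical
  have hLpos : ∀ j : Fin (n + 1), j ≠ 0 → (0 : ℝ) < (latLen u 0 j : ℝ) := by
    intro j hj
    have h2 : 2 ≤ latLen u 0 j := le_trans hk (hkl j hj)
    exact_mod_cast Nat.lt_of_lt_of_le (by norm_num) h2
  have hRL : ∀ j : Fin (n + 1), j ≠ 0 → (rmod u 0 j k : ℝ) ≤ (latLen u 0 j : ℝ) := by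
    intro j hj
    have hkpos : 0 < k := by omega
    have h1 : latLen u 0 j % k < k := Nat.mod_lt _ hkpos
    have h2 := hkl j hj
    have : rmod u 0 j k ≤ latLen u 0 j := by unfold rmod; omega
    exact_mod_cast this
  -- the translation vector rewrite
  have hcvec : ∑ j ∈ Finset.univ.erase (0 : Fin (n + 1)), (t j : ℝ) • primVec u 0 j
      = ∑ j ∈ Finset.univ.erase (0 : Fin (n + 1)),
          ((t j : ℝ) / (latLen u 0 j : ℝ)) • (toR (u j) - toR (u 0)) := by
    refine Finset.sum_congr rfl fun j hj => ?_
    rw [primVec, smul_smul, div_eq_mul_inv]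
  have htL0 : ∀ j : Fin (n + 1), (0 : ℝ) ≤ (t j : ℝ) / (latLen u 0 j : ℝ) :=
    fun j => div_nonneg (Nat.cast_nonneg _) (Nat.cast_nonneg _)
  -- the main per-vertex equivalence
  have mainA : ∀ s ∈ Finset.univ.erase (0 : Fin (n + 1)),
      ((dilVert u 0 k s + ∑ j ∈ Finset.univ.erase (0 : Fin (n + 1)),
          (t j : ℝ) • primVec u 0 j) ∈ lsimplex u ↔
        ∑ j ∈ Finset.univ.erase (0 : Fin (n + 1)), (t j : ℝ) / (latLen u 0 j : ℝ) ≤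
          (rmod u 0 s k : ℝ) / (latLen u 0 s : ℝ)) := by
    intro s hs
    have hs0 : s ≠ 0 := Finset.ne_of_mem_erase hs
    set a : ℝ := ((latLen u 0 s : ℝ) - (rmod u 0 s k : ℝ)) / (latLen u 0 s : ℝ) with hadef
    set cS : Fin (n + 1) → ℝ :=
      fun j => (t j : ℝ) / (latLen u 0 j : ℝ) + (if j = s then a else 0) with hcSdef
    have hLs := hLpos s hs0
    have ha0 : 0 ≤ a := div_nonneg (by linarith [hRL s hs0]) (le_of_lt hLs)
    have hcS0 : ∀ j ∈ Finset.univ.erase (0 : Fin (n + 1)), 0 ≤ cS j := by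
      intro j hj
      have h1 := htL0 j
      have h2 := ha0
      by_cases hjs : j = s
      · subst hjs
        have he : cS j = (t j : ℝ) / (latLen u 0 j : ℝ) + a := by simp [hcSdef]
        rw [he]; linarith
      · simp only [hcSdef, if_neg hjs, add_zero]; exact h1
    have hptA : dilVert u 0 k s + ∑ j ∈ Finset.univ.erase (0 : Fin (n + 1)),
          (t j : ℝ) • primVec u 0 j
        = toR (u 0) + ∑ j ∈ Finset.univ.erase (0 : Fin (n + 1)),
            cS j • (toR (u j) - toR (u 0)) := by
      rw [hcvec, dilVert, if_neg hs0]
      simp only [hcSdef, add_smul, ite_smul, zero_smul, Finset.sum_add_distrib]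
      rw [Finset.sum_ite_eq' (Finset.univ.erase (0 : Fin (n + 1))) s
        (fun j => a • (toR (u j) - toR (u 0))), if_pos hs]
      have hr : (rmod u 0 s k : ℝ) / (latLen u 0 s : ℝ) = 1 - a := by
        rw [hadef]; field_simp; ring
      rw [hr, sub_smul, one_smul, smul_sub]
      abel
    have hsumeq : ∑ j ∈ Finset.univ.erase (0 : Fin (n + 1)), cS j
        = (∑ j ∈ Finset.univ.erase (0 : Fin (n + 1)),
            (t j : ℝ) / (latLen u 0 j : ℝ)) + a := by
      simp only [hcSdef, Finset.sum_add_distrib]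
      rw [Finset.sum_ite_eq' (Finset.univ.erase (0 : Fin (n + 1))) s (fun _ => a), if_pos hs]
    rw [hptA, mem_simplex_comb u hind cS hcS0, hsumeq]
    have hr : (rmod u 0 s k : ℝ) / (latLen u 0 s : ℝ) = 1 - a := by
      rw [hadef]; field_simp; ring
    rw [hr]
    constructor <;> intro h <;> linarith
  -- subset iff all translated vertices lie in P
  have hsub : dilT u 0 k t ⊆ lsimplex u ↔
      ∀ j : Fin (n + 1), (dilVert u 0 k j + ∑ j ∈ Finset.univ.erase (0 : Fin (n + 1)),
        (t j : ℝ) • primVec u 0 j) ∈ lsimplex u := by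
    constructor
    · intro h j
      exact h ⟨dilVert u 0 k j, subset_convexHull ℝ _ ⟨j, rfl⟩, rfl⟩
    · intro h y hy
      obtain ⟨x, hx, rfl⟩ := hy
      have hconv : Convex ℝ ((fun y => y + ∑ j ∈ Finset.univ.erase (0 : Fin (n + 1)),
          (t j : ℝ) • primVec u 0 j) ⁻¹' lsimplex u) :=
        (convex_convexHull ℝ _).translate_preimage_left _
      have : dil u 0 k ⊆ (fun y => y + ∑ j ∈ Finset.univ.erase (0 : Fin (n + 1)),
          (t j : ℝ) • primVec u 0 j) ⁻¹' lsimplex u := by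
        refine convexHull_min ?_ hconv
        rintro z ⟨j, rfl⟩
        exact h j
      exact this hx
  -- the 0-vertex case follows from the others
  have hzero : (∀ s ∈ Finset.univ.erase (0 : Fin (n + 1)),
        ∑ j ∈ Finset.univ.erase (0 : Fin (n + 1)), (t j : ℝ) / (latLen u 0 j : ℝ) ≤
          (rmod u 0 s k : ℝ) / (latLen u 0 s : ℝ)) →
      (dilVert u 0 k 0 + ∑ j ∈ Finset.univ.erase (0 : Fin (n + 1)),
        (t j : ℝ) • primVec u 0 j) ∈ lsimplex u := by
    intro h
    have hv0 : dilVert u 0 k (0 : Fin (n + 1)) = toR (u 0) := by rw [dilVert, if_pos rfl]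
    rw [hv0, hcvec,
      mem_simplex_comb u hind (fun j => (t j : ℝ) / (latLen u 0 j : ℝ)) (fun j _ => htL0 j)]
    rcases (Finset.univ.erase (0 : Fin (n + 1))).eq_empty_or_nonempty with hE | ⟨s, hs⟩
    · simp [hE]
    · have h1 := h s hs
      have hs0 : s ≠ 0 := Finset.ne_of_mem_erase hs
      have h2 : (rmod u 0 s k : ℝ) / (latLen u 0 s : ℝ) ≤ 1 :=
        div_le_one_of_le₀ (hRL s hs0) (le_of_lt (hLpos s hs0))
      linarith
  constructor
  · rw [hsub]
    constructor
    · intro h s hs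
      exact (mainA s hs).mp (h s)
    · intro h j
      by_cases hj : j = 0
      · subst hj; exact hzero h
      · exact (mainA j (Finset.mem_erase.mpr ⟨hj, Finset.mem_univ j⟩)).mpr
          (h j (Finset.mem_erase.mpr ⟨hj, Finset.mem_univ j⟩))
  · exact forall₂_congr mainA
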